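/- Suppose each F_i is strongly convex with modulus μ_i > 0. Let x ∈ ℝⁿ, let d ∈ ℝⁿ with d ≠ 0, let σ ∈ (0,1), and let β ∈ (0,1] satisfy the Armijo condition at β for direction d at x. If the active set A = {i ∈ {1,…,m} : ⟨∇F_i(x), d⟩ = −‖d‖²} is nonempty and μ_max = max{μ_i : i ∈ A}, then β ≤ min{2(1−σ)/μ_max, 1}. -/

import Mathlib

open scoped RealInnerProductSpace

/-- `φ_g(d) = max_{1 ≤ i ≤ m} ⟨g_i, d⟩ + ‖d‖²/2`. -/
noncomputable def phi {n m : ℕ} (g : Fin m → EuclideanSpace ℝ (Fin n))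
    (d : EuclideanSpace ℝ (Fin n)) : ℝ :=
  (⨆ i, ⟪g i, d⟫) + ‖d‖ ^ 2 / 2

/-- The Armijo condition at stepsize `β` for direction `d` at `x`:
`F_i(x + βd) - F_i(x) ≤ σβ⟨∇F_i(x), d⟩` for every `i`. -/
def ArmijoAt {n m : ℕ} (F : Fin m → EuclideanSpace ℝ (Fin n) → ℝ)
    (x d : EuclideanSpace ℝ (Fin n)) (σ β : ℝ) : Prop :=
  ∀ i, F i (x + β • d) - F i x ≤ σ * β * ⟪gradient (F i) x, d⟫

/-- `β` is an Armijo backtracking stepsize: `β ∈ (0,1]`, the Armijo condition holds at `β`,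
and either `β = 1` or the Armijo condition fails (for some index) at `β/γ`. -/
def ArmijoBacktrack {n m : ℕ} (F : Fin m → EuclideanSpace ℝ (Fin n) → ℝ)
    (x d : EuclideanSpace ℝ (Fin n)) (σ γ β : ℝ) : Prop :=
  0 < β ∧ β ≤ 1 ∧ ArmijoAt F x d σ β ∧ (β = 1 ∨ ¬ ArmijoAt F x d σ (β / γ))

/-- Strong-convexity lower bound along a ray, from convexity of `f - μ/2‖·‖²`
and differentiability of `f` at `x`. -/
lemma strong_lb {E : Type*} [NormedAddCommGroup E] [InnerProductSpace ℝ E]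
    [CompleteSpace E] {f : E → ℝ} {μ : ℝ} (hconv : ConvexOn ℝ Set.univ (fun y => f y - μ / 2 * ‖y‖ ^ 2))
    {x d g : E} (hf : HasGradientAt f g x) {β : ℝ} (hβ : 0 < β) :
    β * ⟪g, d⟫ + μ / 2 * β ^ 2 * ‖d‖ ^ 2 ≤ f (x + β • d) - f x := by
  -- the composite function along the line t ↦ x + t • d
  set ψ : ℝ → ℝ := fun t => f (x + t • d) - μ / 2 * ‖x + t • d‖ ^ 2 with hψ
  -- convexity of ψ on univ
  have hψconv : ConvexOn ℝ Set.univ ψ := by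
    have := hconv.comp_affineMap (AffineMap.lineMap (x : E) (x + d))
    have heq : (fun y => f y - μ / 2 * ‖y‖ ^ 2) ∘ (AffineMap.lineMap (x : E) (x + d)) = ψ := by
      funext t
      simp only [Function.comp_apply, AffineMap.lineMap_apply, vsub_eq_sub, vadd_eq_add,
        add_sub_cancel_left]
      rw [add_comm (t • d) x]
    rw [heq] at this
    simpa using this
  -- derivative of ψ at 0
  have hline : HasDerivAt (fun t : ℝ => x + t • d) d 0 := by
    simpa using ((hasDerivAt_id (0 : ℝ)).smul_const d).const_add x
  have hfd : HasFDerivAt f (InnerProductSpace.toDualMap ℝ E g) x :=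
    (hasGradientAt_iff_hasFDerivAt.mp hf)
  have h1 : HasDerivAt (fun t : ℝ => f (x + t • d)) ⟪g, d⟫ 0 := by
    have hfd' : HasFDerivAt f (InnerProductSpace.toDualMap ℝ E g)
        ((fun t : ℝ => x + t • d) 0) := by simpa using hfd
    have := hfd'.comp_hasDerivAt 0 hline
    exact this
  have h2 : HasDerivAt (fun t : ℝ => μ / 2 * ‖x + t • d‖ ^ 2) (μ * ⟪x, d⟫) 0 := by
    have heq : (fun t : ℝ => μ / 2 * ‖x + t • d‖ ^ 2)
        = fun t : ℝ => μ / 2 * (‖x‖ ^ 2 + 2 * (t * ⟪x, d⟫) + t ^ 2 * ‖d‖ ^ 2) := by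
      funext t
      rw [norm_add_sq_real, real_inner_smul_right, norm_smul]
      simp [mul_pow]
    rw [heq]
    have ha : HasDerivAt (fun t : ℝ => t * ⟪x, d⟫) ⟪x, d⟫ 0 := by
      simpa using (hasDerivAt_id (0 : ℝ)).mul_const ⟪x, d⟫
    have hb : HasDerivAt (fun t : ℝ => t ^ 2 * ‖d‖ ^ 2) 0 0 := by
      simpa using (hasDerivAt_pow 2 (0 : ℝ)).mul_const (‖d‖ ^ 2)
    have := (((ha.const_mul 2).const_add (‖x‖ ^ 2)).add hb).const_mul (μ / 2)
    rw [show μ * ⟪x, d⟫ = μ / 2 * (2 * ⟪x, d⟫ + 0) by ring]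
    exact this
  have hψd : HasDerivAt ψ (⟪g, d⟫ - μ * ⟪x, d⟫) 0 := h1.sub h2
  have hslope := hψconv.le_slope_of_hasDerivAt (Set.mem_univ 0) (Set.mem_univ β) hβ hψd
  rw [slope_def_field] at hslope
  have hψ0 : ψ 0 = f x - μ / 2 * ‖x‖ ^ 2 := by simp [ψ]
  have hψβ : ψ β = f (x + β • d) - μ / 2 * ‖x + β • d‖ ^ 2 := rfl
  have hnorm : ‖x + β • d‖ ^ 2 = ‖x‖ ^ 2 + 2 * (β * ⟪x, d⟫) + β ^ 2 * ‖d‖ ^ 2 := by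
    rw [norm_add_sq_real, real_inner_smul_right, norm_smul]
    simp [mul_pow]
  rw [sub_zero, hψ0, hψβ, hnorm, le_div_iff₀ hβ] at hslope
  nlinarith [hslope]

theorem stmt_10 {n m : ℕ} (F : Fin m → EuclideanSpace ℝ (Fin n) → ℝ)
    (mu : Fin m → ℝ) (hmu : ∀ i, 0 < mu i)
    (hsc : ∀ i, ConvexOn ℝ Set.univ (fun y : EuclideanSpace ℝ (Fin n) =>
      F i y - mu i / 2 * ‖y‖ ^ 2))
    (x d : EuclideanSpace ℝ (Fin n)) (hd : d ≠ 0)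
    (σ β : ℝ) (hσ : σ ∈ Set.Ioo (0 : ℝ) 1) (hβ0 : 0 < β) (hβ1 : β ≤ 1)
    (harm : ArmijoAt F x d σ β)
    (A : Finset (Fin m)) (hA : ∀ i, i ∈ A ↔ ⟪gradient (F i) x, d⟫ = -‖d‖ ^ 2)
    (hAne : A.Nonempty) :
    β ≤ min (2 * (1 - σ) / A.sup' hAne mu) 1 := by
  obtain ⟨i, hiA, hsup⟩ := Finset.exists_mem_eq_sup' hAne mu
  have hg : ⟪gradient (F i) x, d⟫ = -‖d‖ ^ 2 := (hA i).mp hiA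
  have hdne : (0 : ℝ) < ‖d‖ ^ 2 := by
    have h := norm_pos_iff.mpr hd
    positivity
  have hdiff : DifferentiableAt ℝ (F i) x := by
    by_contra h
    rw [gradient_eq_zero_of_not_differentiableAt h, inner_zero_left] at hg
    nlinarith
  have hlb := strong_lb (hconv := hsc i) (hf := hdiff.hasGradientAt) (d := d) hβ0
  have hub := harm i
  rw [hg] at hlb hub
  have hμ : 0 < mu i := hmu i
  have hkey : β ≤ 2 * (1 - σ) / mu i := by
    rw [le_div_iff₀ hμ]
    nlinarith [hlb.trans hub, mul_pos hβ0 hdne, mul_pos (mul_pos hβ0 hdne) hβ0]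
  rw [le_min_iff]
  exact ⟨hsup ▸ hkey, hβ1⟩
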